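/- arXiv:1905.00350 — 3 statements merged into one kernel-verified Lean document; each statement's English description precedes it below -/
import Mathlib

section
/- Let q ≥ 1, ζ = exp(2πi/q), and let u, v be unit vectors in ℂⁿ with v not in the complex span of u. Let Pv = v − ⟪u,v⟫u. Then for every unit vector w ∈ ℂⁿ with ⟪u,w⟫ = 0 and every h ∈ ℤ/qℤ, one has Re⟪v, ζʰw⟫ ≤ ‖Pv‖; hence arccos(‖Pv‖) ≤ min over h ∈ ℤ/qℤ of arccos(Re⟪v, ζʰw⟫). In other words, the normalized projection Pv/‖Pv‖ realizes, among all unit vectors in the complex orthogonal complement of u, the minimal orbit distance to v: the projected class 𝒫_u([v]) is the point of L_q^{n−1}(u) closest to [v] with respect to d_L. -/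
/-- Let `q ≥ 1`, `ζ = exp(2πi/q)`, and let `u, v` be unit vectors in
`ℂⁿ` with `v` not in the complex span of `u`. Let `Pv = v − ⟪u,v⟫ • u`. Then for every
unit vector `w` with `⟪u,w⟫ = 0` and every `h ∈ ℤ/qℤ`, `Re⟪v, ζʰ • w⟫ ≤ ‖Pv‖`; hence
`arccos ‖Pv‖ ≤ min_h arccos(Re⟪v, ζʰ • w⟫)`: the projected class is the point of
`L_q^{n−1}(u)` closest to `[v]`. -/
theorem lens_projection_minimality
    (n q : ℕ) (hq : 1 ≤ q)
    (ζ : ℂ) (hζ : ζ = Complex.exp (2 * Real.pi * Complex.I / q))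
    (u v : EuclideanSpace ℂ (Fin n)) (hu : ‖u‖ = 1) (hv : ‖v‖ = 1)
    (hspan : v ∉ Submodule.span ℂ ({u} : Set (EuclideanSpace ℂ (Fin n)))) :
    ∀ Pv : EuclideanSpace ℂ (Fin n), Pv = v - (inner ℂ u v : ℂ) • u →
      ∀ w : EuclideanSpace ℂ (Fin n), ‖w‖ = 1 → (inner ℂ u w : ℂ) = 0 →
        (∀ h : ZMod q, (inner ℂ v ((ζ ^ h.val) • w) : ℂ).re ≤ ‖Pv‖)
        ∧ Real.arccos ‖Pv‖
            ≤ ⨅ h : ZMod q, Real.arccos ((inner ℂ v ((ζ ^ h.val) • w) : ℂ).re) := by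
  intro Pv hPv w hw huw
  have hζabs : ‖ζ‖ = 1 := by
    rw [hζ, Complex.norm_exp]
    have : (2 * Real.pi * Complex.I / q).re = 0 := by
      simp [Complex.div_re]
    rw [this, Real.exp_zero]
  have hnorm : ∀ h : ZMod q, ‖(ζ ^ h.val) • w‖ = 1 := by
    intro h
    rw [norm_smul, hw, mul_one, norm_pow, hζabs, one_pow]
  have key : ∀ h : ZMod q, (inner ℂ v ((ζ ^ h.val) • w) : ℂ).re ≤ ‖Pv‖ := by
    intro h
    have h2 : (inner ℂ v ((ζ ^ h.val) • w) : ℂ) = inner ℂ Pv ((ζ ^ h.val) • w) := by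
      rw [hPv]
      simp [inner_sub_left, inner_smul_left, inner_smul_right, huw]
    calc (inner ℂ v ((ζ ^ h.val) • w) : ℂ).re
        ≤ ‖(inner ℂ v ((ζ ^ h.val) • w) : ℂ)‖ := Complex.re_le_norm _
      _ = ‖(inner ℂ Pv ((ζ ^ h.val) • w) : ℂ)‖ := by rw [h2]
      _ ≤ ‖Pv‖ * ‖(ζ ^ h.val) • w‖ := norm_inner_le_norm _ _
      _ = ‖Pv‖ := by rw [hnorm h, mul_one]
  refine ⟨key, ?_⟩
  haveI : NeZero q := ⟨by omega⟩
  refine le_ciInf fun h => ?_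
  have : Real.arccos = fun x => Real.pi / 2 - Real.arcsin x := by
    funext x; rw [Real.arccos_eq_pi_div_two_sub_arcsin]
  rw [this]
  have := Real.monotone_arcsin (key h)
  simp only []
  linarith
end

section
/- Let q ≥ 1, ζ = exp(2πi/q), let B be a topological space with open cover U₁, …, Uₙ, let φ₁, …, φₙ : B → [0,1] be a partition of unity with Σₗ φₗ = 1 and such that φₗ(b) ≠ 0 implies b ∈ Uₗ, and let η : {1,…,n}² → ℤ/qℤ satisfy the cocycle condition: η(j,k) + η(k,l) = η(j,l) whenever Uⱼ ∩ U_k ∩ Uₗ ≠ ∅. For j ∈ {1,…,n}, g ∈ ℤ/qℤ, and b ∈ B define fⱼ(b,g) = (√φ₁(b)·ζ^{g+η(j,1)}, …, √φₙ(b)·ζ^{g+η(j,n)}) ∈ ℂⁿ. Then: (i) for every b ∈ Uⱼ ∩ U_k and g ∈ ℤ/qℤ, fⱼ(b,g) = f_k(b, g + η(j,k)); and (ii) for every m ∈ ℤ/qℤ, ζᵐ · fⱼ(b,g) = fⱼ(b, g+m). In particular the map [√φ₁(b)ζ^{η(j,1)} : ⋯ : √φₙ(b)ζ^{η(j,n)}],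 taken as a ℤ_q-orbit class in the Lens space, is independent of the index j with b ∈ Uⱼ. -/
lemma root_pow_mod {ζ : ℂ} {q : ℕ} (hq : ζ ^ q = 1) (a : ℕ) :
    ζ ^ (a % q) = ζ ^ a := by
  conv_rhs => rw [← Nat.div_add_mod a q]
  rw [pow_add, pow_mul, hq, one_pow, one_mul]

/-- Let `q ≥ 1`, `ζ = exp(2πi/q)`, let `B` be a topological space
with open cover `U₁, …, Uₙ`, let `φ₁, …, φₙ : B → [0,1]` be a partition of unity
subordinate to the cover, and let `η : Fin n × Fin n → ℤ/qℤ` satisfy the cocycle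
condition on triply-intersecting sets. Define
`fⱼ(b,g) = (√φ₁(b)·ζ^{g+η(j,1)}, …, √φₙ(b)·ζ^{g+η(j,n)}) ∈ ℂⁿ`. Then:
(i) for `b ∈ Uⱼ ∩ U_k` and any `g`, `fⱼ(b,g) = f_k(b, g + η(j,k))`;
(ii) `ζᵐ • fⱼ(b,g) = fⱼ(b, g + m)`; and in particular the `ℤ/qℤ`-orbit class of
`fⱼ(b,0)` is independent of the index `j` with `b ∈ Uⱼ`. -/
theorem lens_classifying_map_wellDefined_equivariant
    (n q : ℕ) (hq : 1 ≤ q)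
    (ζ : ℂ) (hζ : ζ = Complex.exp (2 * Real.pi * Complex.I / q))
    {B : Type*} [TopologicalSpace B]
    (U : Fin n → Set B) (hUopen : ∀ j, IsOpen (U j)) (hUcover : ⋃ j, U j = Set.univ)
    (φ : Fin n → B → ℝ)
    (hφ0 : ∀ l b, 0 ≤ φ l b) (hφ1 : ∀ l b, φ l b ≤ 1)
    (hφcont : ∀ l, Continuous (φ l))
    (hφsum : ∀ b, ∑ l, φ l b = 1)
    (hφsupp : ∀ l b, φ l b ≠ 0 → b ∈ U l)
    (η : Fin n → Fin n → ZMod q)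
    (hcocycle : ∀ j k l, (U j ∩ U k ∩ U l).Nonempty → η j k + η k l = η j l)
    (f : Fin n → B → ZMod q → EuclideanSpace ℂ (Fin n))
    (hf : ∀ j b g, f j b g
        = fun l => (Real.sqrt (φ l b) : ℂ) * ζ ^ (g + η j l).val) :
    (∀ j k : Fin n, ∀ b ∈ U j ∩ U k, ∀ g : ZMod q,
        f j b g = f k b (g + η j k))
    ∧ (∀ j : Fin n, ∀ b : B, ∀ g m : ZMod q,
        (ζ ^ m.val) • f j b g = f j b (g + m))
    ∧ (∀ j k : Fin n, ∀ b ∈ U j ∩ U k,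
        ∃ m : ZMod q, f j b 0 = (ζ ^ m.val) • f k b 0) := by
  have hq0 : (q : ℂ) ≠ 0 := Nat.cast_ne_zero.mpr (by omega)
  have hroot : ζ ^ q = 1 := by
    have h2 : (q : ℂ) * (2 * Real.pi * Complex.I / q) = 2 * Real.pi * Complex.I := by
      field_simp
    rw [hζ, ← Complex.exp_nat_mul, h2, Complex.exp_two_pi_mul_I]
  haveI : NeZero q := ⟨by omega⟩
  have hval : ∀ x y : ZMod q, ζ ^ (x + y).val = ζ ^ x.val * ζ ^ y.val := by
    intro x y
    rw [ZMod.val_add, root_pow_mod hroot, pow_add]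
  -- (i)
  have part1 : ∀ j k : Fin n, ∀ b ∈ U j ∩ U k, ∀ g : ZMod q,
      f j b g = f k b (g + η j k) := by
    intro j k b hb g
    apply WithLp.ofLp_injective
    rw [hf, hf]
    funext l
    by_cases hl : φ l b = 0
    · simp [hl]
    · have hbl : b ∈ U l := hφsupp l b hl
      have hco : η j k + η k l = η j l :=
        hcocycle j k l ⟨b, ⟨hb.1, hb.2⟩, hbl⟩
      have : g + η j l = g + η j k + η k l := by rw [← hco]; ring
      rw [this]
  -- (ii)
  have part2 : ∀ j : Fin n, ∀ b : B, ∀ g m : ZMod q,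
      (ζ ^ m.val) • f j b g = f j b (g + m) := by
    intro j b g m
    apply WithLp.ofLp_injective
    rw [WithLp.ofLp_smul, hf, hf]
    funext l
    show ζ ^ m.val * _ = _
    have : g + m + η j l = m + (g + η j l) := by ring
    rw [this, hval]
    ring
  refine ⟨part1, part2, ?_⟩
  intro j k b hb
  refine ⟨η j k, ?_⟩
  rw [part1 j k b hb 0, ← part2 k b 0 (η j k)]
end

section
/- Let q ≥ 1, ζ = exp(2πi/q), let φ₁, …, φₙ : B → [0,1] be a partition of unity on a space B, let η : {1,…,n}² → ℤ/qℤ, let α : {1,…,n} → ℤ/qℤ, and set η'(j,k) = η(j,k) + α(k) − α(j) (i.e. η' = η + δ⁰α is cohomologous to η). Then for every j and every b ∈ B, the vector (√φ₁(b)·ζ^{η'(j,1)}, …, √φₙ(b)·ζ^{η'(j,n)}) equals ζ^{−α(j)} · Z_α · (√φ₁(b)·ζ^{η(j,1)}, …, √φₙ(b)·ζ^{η(j,n)}), where Z_α is the diagonal matrix with diagonal entries ζ^{α(1)}, …, ζ^{α(n)}. In particular, passing to ℤ_q-orbit classes, f_{η'}(b) = Z_α · f_η(b) in the Lens space L_q^n: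 the Lens coordinates of cohomologous cocycles differ by the isometry of L_q^n induced by the unitary map Z_α. -/
/-- Let `q ≥ 1`, `ζ = exp(2πi/q)`, let `φ₁, …, φₙ : B → [0,1]` be a
partition of unity on a space `B`, let `η : Fin n × Fin n → ℤ/qℤ`,
`α : Fin n → ℤ/qℤ`, and set `η'(j,k) = η(j,k) + α(k) − α(j)`. Then for every `j` and
`b ∈ B`, the vector `(√φₗ(b)·ζ^{η'(j,l)})ₗ` equals
`ζ^{−α(j)} • Z_α (√φₗ(b)·ζ^{η(j,l)})ₗ`, where `Z_α` is the diagonal matrix with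
entries `ζ^{α(l)}`. In particular the Lens coordinates of cohomologous cocycles
differ by the isometry induced by `Z_α`. -/
theorem lens_coordinates_cohomologous_cocycles
    (n q : ℕ) (hq : 1 ≤ q)
    (ζ : ℂ) (hζ : ζ = Complex.exp (2 * Real.pi * Complex.I / q))
    {B : Type*} (φ : Fin n → B → ℝ)
    (hφ0 : ∀ l b, 0 ≤ φ l b) (hφ1 : ∀ l b, φ l b ≤ 1)
    (hφsum : ∀ b, ∑ l, φ l b = 1)
    (η η' : Fin n → Fin n → ZMod q) (α : Fin n → ZMod q)
    (hη' : ∀ j k, η' j k = η j k + α k - α j) :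
    ∀ (j : Fin n) (b : B),
      (WithLp.toLp 2 (fun l => (Real.sqrt (φ l b) : ℂ) * ζ ^ (η' j l).val)
          : EuclideanSpace ℂ (Fin n))
        = (ζ ^ (-α j).val) •
          (WithLp.toLp 2 (fun l => (ζ ^ (α l).val) * ((Real.sqrt (φ l b) : ℂ) * ζ ^ (η j l).val))
            : EuclideanSpace ℂ (Fin n)) := by
  intro j b
  have hq0 : (q : ℕ) ≠ 0 := by omega
  haveI : NeZero q := ⟨hq0⟩
  have hζq : ζ ^ q = 1 := by
    rw [hζ, ← Complex.exp_nat_mul]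
    have : (q : ℂ) ≠ 0 := Nat.cast_ne_zero.mpr hq0
    rw [mul_div_cancel₀ _ this, Complex.exp_two_pi_mul_I]
  have hmod : ∀ m : ℕ, ζ ^ (m % q) = ζ ^ m := by
    intro m
    conv_rhs => rw [← Nat.mod_add_div m q]
    rw [pow_add, pow_mul, hζq, one_pow, mul_one]
  have key : ∀ x y : ZMod q, ζ ^ (x + y).val = ζ ^ x.val * ζ ^ y.val := by
    intro x y
    rw [ZMod.val_add, hmod, pow_add]
  ext l
  have h1 : η' j l = (-α j) + (α l + η j l) := by rw [hη' j l]; ring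
  show (Real.sqrt (φ l b) : ℂ) * ζ ^ (η' j l).val
      = ζ ^ (-α j).val * (ζ ^ (α l).val * ((Real.sqrt (φ l b) : ℂ) * ζ ^ (η j l).val))
  rw [h1, key, key]
  ring
end
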